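/- arXiv:1506.03270 — 4 statements merged into one kernel-verified Lean document; each statement's English description precedes it below -/
import Mathlib

section
/- Let g(φ) = φ/sin φ and μ(φ) = (φ − sin φ cos φ)/sin²φ. Then for every φ ∈ (0,π), (g″(φ)·μ′(φ) − g′(φ)·μ″(φ))/(μ′(φ))³ = sin³φ cos φ/(4(sin φ − φ cos φ)), where g′, g″, μ′, μ″ denote first and second derivatives. -/
open Real

/-- `g(φ) = φ/sin φ`. -/
noncomputable def gH (φ : ℝ) : ℝ := φ / Real.sin φ

/-- `μ(φ) = (φ − sin φ cos φ)/sin²φ`. -/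
noncomputable def muH (φ : ℝ) : ℝ := (φ - Real.sin φ * Real.cos φ) / (Real.sin φ) ^ 2

noncomputable def g1 (x : ℝ) : ℝ := (Real.sin x - x * Real.cos x) / (Real.sin x) ^ 2

noncomputable def mu2 (x : ℝ) : ℝ := 2 * (Real.sin x - x * Real.cos x) / (Real.sin x) ^ 3

lemma hasDerivAt_sin_sq (x : ℝ) :
    HasDerivAt (fun y => (Real.sin y) ^ 2) (2 * Real.sin x * Real.cos x) x := by
  have := (Real.hasDerivAt_sin x).pow 2
  refine this.congr_deriv ?_
  push_cast; ring

lemma hasDerivAt_sin_cube (x : ℝ) :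
    HasDerivAt (fun y => (Real.sin y) ^ 3) (3 * (Real.sin x) ^ 2 * Real.cos x) x := by
  have := (Real.hasDerivAt_sin x).pow 3
  refine this.congr_deriv ?_
  norm_num

lemma hasDerivAt_A (x : ℝ) :
    HasDerivAt (fun y => Real.sin y - y * Real.cos y) (x * Real.sin x) x := by
  have h := (Real.hasDerivAt_sin x).sub ((hasDerivAt_id x).mul (Real.hasDerivAt_cos x))
  refine h.congr_deriv ?_
  simp [id_eq]

lemma hasDerivAt_M (x : ℝ) :
    HasDerivAt (fun y => y - Real.sin y * Real.cos y)
      (1 - (Real.cos x * Real.cos x - Real.sin x * Real.sin x)) x := by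
  have h := (hasDerivAt_id x).sub ((Real.hasDerivAt_sin x).mul (Real.hasDerivAt_cos x))
  refine h.congr_deriv ?_; ring

lemma hasDerivAt_gH {x : ℝ} (hx : Real.sin x ≠ 0) : HasDerivAt gH (g1 x) x := by
  have h := (hasDerivAt_id x).div (Real.hasDerivAt_sin x) hx
  refine h.congr_deriv ?_
  simp [g1]

lemma hasDerivAt_muH {x : ℝ} (hx : Real.sin x ≠ 0) : HasDerivAt muH (mu2 x) x := by
  have hx2 : (Real.sin x) ^ 2 ≠ 0 := pow_ne_zero 2 hx
  have h := (hasDerivAt_M x).div (hasDerivAt_sin_sq x) hx2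
  refine h.congr_deriv ?_; symm
  have hsc : Real.sin x ^ 2 + Real.cos x ^ 2 = 1 := Real.sin_sq_add_cos_sq x
  unfold mu2
  rw [div_eq_div_iff (by positivity) (by positivity)]
  linear_combination (-(Real.sin x ^ 5)) * hsc

lemma hasDerivAt_g1 {x : ℝ} (hx : Real.sin x ≠ 0) :
    HasDerivAt g1
      ((x * Real.sin x * (Real.sin x) ^ 2
          - (Real.sin x - x * Real.cos x) * (2 * Real.sin x * Real.cos x))
        / ((Real.sin x) ^ 2) ^ 2) x := by
  have hx2 : (Real.sin x) ^ 2 ≠ 0 := pow_ne_zero 2 hx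
  exact (hasDerivAt_A x).div (hasDerivAt_sin_sq x) hx2

lemma hasDerivAt_mu2 {x : ℝ} (hx : Real.sin x ≠ 0) :
    HasDerivAt mu2
      ((2 * (x * Real.sin x) * (Real.sin x) ^ 3
          - 2 * (Real.sin x - x * Real.cos x) * (3 * (Real.sin x) ^ 2 * Real.cos x))
        / ((Real.sin x) ^ 3) ^ 2) x := by
  have hx3 : (Real.sin x) ^ 3 ≠ 0 := pow_ne_zero 3 hx
  have hnum : HasDerivAt (fun y => 2 * (Real.sin y - y * Real.cos y)) (2 * (x * Real.sin x)) x :=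
    (hasDerivAt_A x).const_mul 2
  have h := hnum.div (hasDerivAt_sin_cube x) hx3
  exact h

lemma isOpen_sin_ne : IsOpen {x : ℝ | Real.sin x ≠ 0} :=
  isOpen_compl_iff.mpr (isClosed_eq Real.continuous_sin continuous_const)

lemma deriv_gH_eventually {x : ℝ} (hx : Real.sin x ≠ 0) : deriv gH =ᶠ[nhds x] g1 := by
  filter_upwards [isOpen_sin_ne.mem_nhds hx] with y hy
  exact (hasDerivAt_gH hy).deriv

lemma deriv_muH_eventually {x : ℝ} (hx : Real.sin x ≠ 0) : deriv muH =ᶠ[nhds x] mu2 := by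
  filter_upwards [isOpen_sin_ne.mem_nhds hx] with y hy
  exact (hasDerivAt_muH hy).deriv

/-- For `φ ∈ (0,π)`,
`(g″μ′ − g′μ″)/(μ′)³ = sin³φ cos φ/(4(sin φ − φ cos φ))`. -/
theorem gH_muH_second_deriv_quotient (φ : ℝ) (hφ : φ ∈ Set.Ioo 0 π) :
    (deriv (deriv gH) φ * deriv muH φ - deriv gH φ * deriv (deriv muH) φ)
        / (deriv muH φ) ^ 3
      = (Real.sin φ) ^ 3 * Real.cos φ / (4 * (Real.sin φ - φ * Real.cos φ)) := by
  obtain ⟨h0, hπ⟩ := hφ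
  have hsin : 0 < Real.sin φ := Real.sin_pos_of_pos_of_lt_pi h0 hπ
  have hs : Real.sin φ ≠ 0 := ne_of_gt hsin
  have hA : 0 < Real.sin φ - φ * Real.cos φ := by
    rcases le_or_gt (Real.cos φ) 0 with hc | hc
    · have : φ * Real.cos φ ≤ 0 := mul_nonpos_of_nonneg_of_nonpos h0.le hc
      linarith
    · have hφ2 : φ < π / 2 := by
        by_contra h
        push_neg at h
        have : Real.cos φ ≤ 0 :=
          Real.cos_nonpos_of_pi_div_two_le_of_le h (by linarith [Real.pi_pos])
        linarith
      have ht : φ < Real.tan φ := Real.lt_tan h0 hφ2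
      have h2 : φ * Real.cos φ < Real.tan φ * Real.cos φ := mul_lt_mul_of_pos_right ht hc
      rw [Real.tan_eq_sin_div_cos, div_mul_cancel₀ _ (ne_of_gt hc)] at h2
      linarith
  have hAne : Real.sin φ - φ * Real.cos φ ≠ 0 := ne_of_gt hA
  rw [(hasDerivAt_gH hs).deriv, (hasDerivAt_muH hs).deriv,
    (deriv_gH_eventually hs).deriv_eq, (deriv_muH_eventually hs).deriv_eq,
    (hasDerivAt_g1 hs).deriv, (hasDerivAt_mu2 hs).deriv]
  unfold g1 mu2
  field_simp
  ring
end

section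
/- The function μ(φ) = (φ − sin φ cos φ)/sin²φ maps (0,π) bijectively and strictly increasingly onto (0,∞): μ(φ) → 0 as φ → 0⁺, μ(φ) → +∞ as φ → π⁻, and for every u > 0 there exists a unique φ ∈ (0,π) with μ(φ) = u. -/
open Real Filter

lemma key_ineq {φ : ℝ} (h : φ ∈ Set.Ioo 0 π) : 0 < Real.sin φ - φ * Real.cos φ := by
  obtain ⟨h0, hπ⟩ := h
  have hs : 0 < Real.sin φ := Real.sin_pos_of_pos_of_lt_pi h0 hπ
  rcases le_or_gt (Real.cos φ) 0 with hc | hc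
  · nlinarith
  · have hφ : φ < π / 2 := by
      by_contra hge
      push_neg at hge
      have := Real.cos_nonpos_of_pi_div_two_le_of_le hge (by linarith [Real.pi_pos])
      linarith
    have ht : φ < Real.tan φ := Real.lt_tan h0 hφ
    rw [Real.tan_eq_sin_div_cos] at ht
    have : φ * Real.cos φ < Real.sin φ := by
      rwa [lt_div_iff₀ hc] at ht
    linarith

lemma muH_hasDerivAt {φ : ℝ} (hs : Real.sin φ ≠ 0) :
    HasDerivAt muH (2 * (Real.sin φ - φ * Real.cos φ) / Real.sin φ ^ 3) φ := by
  have h1 : HasDerivAt (fun φ => φ - Real.sin φ * Real.cos φ)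
      (1 - (Real.cos φ * Real.cos φ + Real.sin φ * (-Real.sin φ))) φ :=
    (hasDerivAt_id φ).sub ((Real.hasDerivAt_sin φ).mul (Real.hasDerivAt_cos φ))
  have h2 : HasDerivAt (fun φ => Real.sin φ ^ 2)
      ((2 : ℕ) * Real.sin φ ^ 1 * Real.cos φ) φ :=
    (Real.hasDerivAt_sin φ).pow 2
  have hs2 : Real.sin φ ^ 2 ≠ 0 := pow_ne_zero _ hs
  have := h1.div h2 hs2
  refine this.congr_deriv ?_
  have hpy := Real.sin_sq_add_cos_sq φ
  field_simp
  linear_combination (Real.sin φ) * hpy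

lemma muH_contOn : ContinuousOn muH (Set.Ioo 0 π) := by
  apply ContinuousOn.div
  · fun_prop
  · fun_prop
  · intro φ hφ
    exact pow_ne_zero _ (ne_of_gt (Real.sin_pos_of_pos_of_lt_pi hφ.1 hφ.2))

lemma muH_mono : StrictMonoOn muH (Set.Ioo 0 π) := by
  apply strictMonoOn_of_deriv_pos (convex_Ioo 0 π) muH_contOn
  intro φ hφ
  rw [interior_Ioo] at hφ
  have hs : 0 < Real.sin φ := Real.sin_pos_of_pos_of_lt_pi hφ.1 hφ.2
  rw [(muH_hasDerivAt (ne_of_gt hs)).deriv]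
  have := key_ineq hφ
  positivity

lemma muH_pos : ∀ φ ∈ Set.Ioo 0 π, 0 < muH φ := by
  intro φ hφ
  have hs : 0 < Real.sin φ := Real.sin_pos_of_pos_of_lt_pi hφ.1 hφ.2
  have h2 : Real.sin (2 * φ) < 2 * φ := Real.sin_lt (by linarith [hφ.1])
  rw [Real.sin_two_mul] at h2
  have hnum : 0 < φ - Real.sin φ * Real.cos φ := by nlinarith
  exact div_pos hnum (by positivity)

lemma muH_tendsto_zero : Tendsto muH (nhdsWithin 0 (Set.Ioo 0 π)) (nhds 0) := by
  have hb : ∀ᶠ φ in nhdsWithin 0 (Set.Ioo 0 π),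
      0 ≤ muH φ ∧ muH φ ≤ 16 / 9 * φ := by
    filter_upwards [self_mem_nhdsWithin,
      eventually_nhdsWithin_of_eventually_nhds
        (Filter.Tendsto.eventually_lt_const (by norm_num : (0:ℝ) < 1/2) tendsto_id)]
      with φ hφ hlt
    rw [id_eq] at hlt
    have hs : 0 < Real.sin φ := Real.sin_pos_of_pos_of_lt_pi hφ.1 hφ.2
    constructor
    · exact le_of_lt (muH_pos φ hφ)
    · have h1 : 2 * φ - (2 * φ) ^ 3 / 4 < Real.sin (2 * φ) :=
        by have h := Real.sin_gt_sub_cube (by linarith [hφ.1] : (0:ℝ) < 2 * φ); linarith [pow_pos (by linarith [hφ.1] : (0:ℝ) < 2 * φ) 3]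
      rw [Real.sin_two_mul] at h1
      have h2 : φ - φ ^ 3 / 4 < Real.sin φ :=
        by have h := Real.sin_gt_sub_cube hφ.1; linarith [pow_pos hφ.1 3]
      have hsl : 15 / 16 * φ ≤ Real.sin φ := by nlinarith [hφ.1, sq_nonneg (φ - 1/2), mul_pos hφ.1 hφ.1]
      rw [muH, div_le_iff₀ (by positivity)]
      have hsq : (15 / 16 * φ) ^ 2 ≤ Real.sin φ ^ 2 :=
        pow_le_pow_left₀ (by linarith [hφ.1]) hsl 2
      nlinarith [hφ.1, mul_le_mul_of_nonneg_left hsq (le_of_lt hφ.1), h1]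
  have h16 : Tendsto (fun φ : ℝ => 16 / 9 * φ) (nhdsWithin 0 (Set.Ioo 0 π)) (nhds 0) := by
    have : Tendsto (fun φ : ℝ => 16 / 9 * φ) (nhds 0) (nhds 0) := by
      simpa using (continuous_mul_left (16/9 : ℝ)).tendsto 0
    exact this.mono_left nhdsWithin_le_nhds
  exact squeeze_zero' (hb.mono fun φ h => h.1) (hb.mono fun φ h => h.2) h16

lemma muH_tendsto_top : Tendsto muH (nhdsWithin π (Set.Ioo 0 π)) atTop := by
  have hnum : Tendsto (fun φ => φ - Real.sin φ * Real.cos φ)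
      (nhdsWithin π (Set.Ioo 0 π)) (nhds π) := by
    have : Tendsto (fun φ => φ - Real.sin φ * Real.cos φ) (nhds π)
        (nhds (π - Real.sin π * Real.cos π)) :=
      (continuous_id.sub (Real.continuous_sin.mul Real.continuous_cos)).tendsto π
    rw [Real.sin_pi] at this
    simpa using this.mono_left nhdsWithin_le_nhds
  have hden : Tendsto (fun φ => (Real.sin φ ^ 2)⁻¹)
      (nhdsWithin π (Set.Ioo 0 π)) atTop := by
    apply Filter.Tendsto.inv_tendsto_nhdsGT_zero
    rw [tendsto_nhdsWithin_iff]
    constructor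
    · have : Tendsto (fun φ => Real.sin φ ^ 2) (nhds π) (nhds (Real.sin π ^ 2)) :=
        (Real.continuous_sin.pow 2).tendsto π
      rw [Real.sin_pi] at this
      simpa using this.mono_left nhdsWithin_le_nhds
    · filter_upwards [self_mem_nhdsWithin] with φ hφ
      exact pow_pos (Real.sin_pos_of_pos_of_lt_pi hφ.1 hφ.2) 2
  have := hnum.pos_mul_atTop Real.pi_pos hden
  refine this.congr fun φ => ?_
  rw [muH, div_eq_mul_inv]

/-- `μ` maps `(0,π)` bijectively and strictly increasingly onto `(0,∞)`:
it is strictly increasing, tends to `0` as `φ → 0⁺`, tends to `+∞` as `φ → π⁻`,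
and every `u > 0` equals `μ(φ)` for a unique `φ ∈ (0,π)`. -/
theorem muH_bijective_onto_pos :
    StrictMonoOn muH (Set.Ioo 0 π) ∧
    (∀ φ ∈ Set.Ioo 0 π, 0 < muH φ) ∧
    Tendsto muH (nhdsWithin 0 (Set.Ioo 0 π)) (nhds 0) ∧
    Tendsto muH (nhdsWithin π (Set.Ioo 0 π)) atTop ∧
    (∀ u : ℝ, 0 < u → ∃! φ, φ ∈ Set.Ioo 0 π ∧ muH φ = u) := by
  refine ⟨muH_mono, muH_pos, muH_tendsto_zero, muH_tendsto_top, ?_⟩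
  intro u hu
  haveI h0ne : (nhdsWithin (0:ℝ) (Set.Ioo 0 π)).NeBot := by
    rw [← mem_closure_iff_nhdsWithin_neBot, closure_Ioo (ne_of_lt Real.pi_pos)]
    exact ⟨le_refl 0, le_of_lt Real.pi_pos⟩
  haveI hπne : (nhdsWithin π (Set.Ioo 0 π)).NeBot := by
    rw [← mem_closure_iff_nhdsWithin_neBot, closure_Ioo (ne_of_lt Real.pi_pos)]
    exact ⟨le_of_lt Real.pi_pos, le_refl π⟩
  obtain ⟨a, ha, hau⟩ :=
    ((muH_tendsto_zero.eventually (Filter.Tendsto.eventually_lt_const hu tendsto_id)).and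
      self_mem_nhdsWithin).exists
  rw [id_eq] at ha
  obtain ⟨b, hb, hbu⟩ :=
    ((muH_tendsto_top.eventually (eventually_gt_atTop u)).and self_mem_nhdsWithin).exists
  -- ha : muH a < u, hb : u < muH b
  have hab : a < b := by
    by_contra hba
    push_neg at hba
    have := muH_mono.monotoneOn hbu hau hba
    linarith
  have hsub : Set.Icc a b ⊆ Set.Ioo 0 π := fun x hx =>
    ⟨lt_of_lt_of_le hau.1 hx.1, lt_of_le_of_lt hx.2 hbu.2⟩
  have hcont : ContinuousOn muH (Set.Icc a b) := muH_contOn.mono hsub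
  have hmem : u ∈ Set.Icc (muH a) (muH b) := ⟨le_of_lt ha, le_of_lt hb⟩
  obtain ⟨φ, hφ, hφu⟩ := intermediate_value_Icc (le_of_lt hab) hcont hmem
  refine ⟨φ, ⟨hsub hφ, hφu⟩, ?_⟩
  intro ψ hψ
  exact muH_mono.injOn hψ.1 (hsub hφ) (by rw [hψ.2, hφu])
end

section
/- For every φ ∈ [0, π], one has the inequality φ sin²φ cos φ ≤ 3(sin φ − φ cos φ). -/
open Real

private noncomputable def heisG : ℝ → ℝ :=
  fun x => 3 * (Real.sin x - x * Real.cos x) - x * (Real.sin x) ^ 2 * Real.cos x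

private lemma heisG_hasDerivAt (x : ℝ) :
    HasDerivAt heisG
      (3 * x * Real.sin x - (Real.sin x) ^ 2 * Real.cos x
        - 2 * x * Real.sin x * (Real.cos x) ^ 2 + x * (Real.sin x) ^ 3) x := by
  have hs := Real.hasDerivAt_sin x
  have hc := Real.hasDerivAt_cos x
  have hid := hasDerivAt_id x
  have h := ((hs.sub (hid.mul hc)).const_mul 3).sub (((hid.mul (hs.pow 2)).mul hc))
  convert h using 1
  · rfl
  · rfl
  · rfl
  · simp only [id_eq, Pi.pow_apply, Pi.mul_apply, Nat.cast_ofNat]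
    ring

/-- For every `φ ∈ [0,π]`, `φ sin²φ cos φ ≤ 3(sin φ − φ cos φ)`. -/
theorem heis_F_le_three (φ : ℝ) (hφ : φ ∈ Set.Icc 0 π) :
    φ * (Real.sin φ) ^ 2 * Real.cos φ ≤ 3 * (Real.sin φ - φ * Real.cos φ) := by
  have hmono : MonotoneOn heisG (Set.Icc 0 π) := by
    apply monotoneOn_of_deriv_nonneg (convex_Icc 0 π)
    · exact (Continuous.continuousOn (by unfold heisG; fun_prop))
    · intro x hx
      exact (heisG_hasDerivAt x).differentiableAt.differentiableWithinAt
    · intro x hx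
      rw [interior_Icc] at hx
      rw [(heisG_hasDerivAt x).deriv]
      have hx0 : (0:ℝ) ≤ x := le_of_lt hx.1
      have hxpi : x ≤ π := le_of_lt hx.2
      have hsin : 0 ≤ Real.sin x := Real.sin_nonneg_of_nonneg_of_le_pi hx0 hxpi
      have h2x : Real.sin (2 * x) ≤ 2 * x := Real.sin_le (by linarith)
      rw [Real.sin_two_mul] at h2x
      have hc2 : (Real.cos x) ^ 2 ≤ 1 := by nlinarith [Real.sin_sq_add_cos_sq x]
      have hpy := Real.sin_sq_add_cos_sq x
      have hsin3 : Real.sin x ^ 3 = Real.sin x - Real.sin x * Real.cos x ^ 2 := by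
        linear_combination Real.sin x * hpy
      rw [hsin3]
      nlinarith [mul_nonneg (mul_nonneg hsin hx0) (sub_nonneg.mpr hc2),
        mul_nonneg hsin (by linarith : (0:ℝ) ≤ 2 * x - 2 * (Real.sin x * Real.cos x))]
  have h0 : heisG 0 = 0 := by simp [heisG]
  have := hmono (Set.left_mem_Icc.mpr Real.pi_pos.le) hφ hφ.1
  rw [h0] at this
  unfold heisG at this
  linarith
end

section
/- Let F : (0,π) → ℝ, F(φ) = φ sin²φ cos φ/(sin φ − φ cos φ). There exists a unique φ_m ∈ (0,π) such that F is strictly decreasing on (0, φ_m] and strictly increasing on [φ_m, π); moreover F(π/2) = 0 and F(φ) → 0 as φ → π⁻. -/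
open Real Filter

/-- `F(φ) = φ sin²φ cos φ/(sin φ − φ cos φ)`. -/
noncomputable def FH (φ : ℝ) : ℝ :=
  φ * (Real.sin φ) ^ 2 * Real.cos φ / (Real.sin φ - φ * Real.cos φ)

set_option maxHeartbeats 1000000


lemma nonneg_of_hasDerivAt {F f : ℝ → ℝ} (hF : ∀ x, HasDerivAt F (f x) x)
    (h0 : F 0 = 0) (hf : ∀ x, 0 < x → 0 ≤ f x) : ∀ x, 0 ≤ x → 0 ≤ F x := by
  intro x hx
  have hmono : MonotoneOn F (Set.Icc 0 x) := by
    apply monotoneOn_of_deriv_nonneg (convex_Icc 0 x)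
    · exact fun y _ => (hF y).continuousAt.continuousWithinAt
    · exact fun y _ => (hF y).differentiableAt.differentiableWithinAt
    · intro y hy
      rw [interior_Icc] at hy
      rw [(hF y).deriv]
      exact hf y hy.1
  rcases eq_or_lt_of_le hx with rfl | h
  · exact le_of_eq h0.symm
  · have := hmono (Set.left_mem_Icc.2 hx) (Set.right_mem_Icc.2 hx) hx
    rwa [h0] at this

lemma T_s1 : ∀ x : ℝ, 0 ≤ x → Real.sin x ≤ x := by
  have H := nonneg_of_hasDerivAt (F := fun x => x - Real.sin x) (f := fun x => 1 - Real.cos x)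
    (fun x => (hasDerivAt_id x).sub (Real.hasDerivAt_sin x))
    (by simp) (fun x _ => by
      show (0:ℝ) ≤ 1 - Real.cos x
      nlinarith [Real.cos_le_one x])
  intro x hx
  have h := H x hx; linarith

lemma T_c2 : ∀ x : ℝ, 0 ≤ x → 1 - x^2/2 ≤ Real.cos x := by
  have H := nonneg_of_hasDerivAt (F := fun x => Real.cos x - (1 - x^2/2))
    (f := fun x => x - Real.sin x)
    (fun x => by
      have h1 := (Real.hasDerivAt_cos x).sub
        ((hasDerivAt_const x (1:ℝ)).sub (((hasDerivAt_pow 2 x)).div_const 2))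
      refine h1.congr_deriv (Eq.symm ?_); simp; ring)
    (by norm_num) (fun x hx => by
      show (0:ℝ) ≤ x - Real.sin x
      linarith [T_s1 x hx.le])
  intro x hx
  have h := H x hx; linarith

lemma T_s3 : ∀ x : ℝ, 0 ≤ x → x - x^3/6 ≤ Real.sin x := by
  have H := nonneg_of_hasDerivAt (F := fun x => Real.sin x - (x - x^3/6)) (f := fun x => Real.cos x - (1 - x^2/2))
    (fun x => by
      have h1 := (Real.hasDerivAt_sin x).sub ((hasDerivAt_id x).sub ((hasDerivAt_pow 3 x).div_const 6))
      refine h1.congr_deriv (Eq.symm ?_)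
      norm_num
      try ring)
    (by norm_num) (fun x hx => by
      show (0:ℝ) ≤ Real.cos x - (1 - x^2/2)
      linarith [T_c2 x hx.le])
  intro x hx
  have h := H x hx; linarith

lemma T_c4 : ∀ x : ℝ, 0 ≤ x → Real.cos x ≤ 1 - x^2/2 + x^4/24 := by
  have H := nonneg_of_hasDerivAt (F := fun x => (1 - x^2/2 + x^4/24) - Real.cos x) (f := fun x => Real.sin x - (x - x^3/6))
    (fun x => by
      have h1 := (((hasDerivAt_const x (1:ℝ)).sub ((hasDerivAt_pow 2 x).div_const 2)).add ((hasDerivAt_pow 4 x).div_const 24)).sub (Real.hasDerivAt_cos x)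
      refine h1.congr_deriv (Eq.symm ?_)
      norm_num
      try ring)
    (by norm_num) (fun x hx => by
      show (0:ℝ) ≤ Real.sin x - (x - x^3/6)
      linarith [T_s3 x hx.le])
  intro x hx
  have h := H x hx; linarith

lemma T_s5 : ∀ x : ℝ, 0 ≤ x → Real.sin x ≤ x - x^3/6 + x^5/120 := by
  have H := nonneg_of_hasDerivAt (F := fun x => (x - x^3/6 + x^5/120) - Real.sin x) (f := fun x => (1 - x^2/2 + x^4/24) - Real.cos x)
    (fun x => by
      have h1 := (((hasDerivAt_id x).sub ((hasDerivAt_pow 3 x).div_const 6)).add ((hasDerivAt_pow 5 x).div_const 120)).sub (Real.hasDerivAt_sin x)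
      refine h1.congr_deriv (Eq.symm ?_)
      norm_num
      try ring)
    (by norm_num) (fun x hx => by
      show (0:ℝ) ≤ (1 - x^2/2 + x^4/24) - Real.cos x
      linarith [T_c4 x hx.le])
  intro x hx
  have h := H x hx; linarith

lemma T_c6 : ∀ x : ℝ, 0 ≤ x → 1 - x^2/2 + x^4/24 - x^6/720 ≤ Real.cos x := by
  have H := nonneg_of_hasDerivAt (F := fun x => Real.cos x - (1 - x^2/2 + x^4/24 - x^6/720)) (f := fun x => (x - x^3/6 + x^5/120) - Real.sin x)
    (fun x => by
      have h1 := (Real.hasDerivAt_cos x).sub ((((hasDerivAt_const x (1:ℝ)).sub ((hasDerivAt_pow 2 x).div_const 2)).add ((hasDerivAt_pow 4 x).div_const 24)).sub ((hasDerivAt_pow 6 x).div_const 720))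
      refine h1.congr_deriv (Eq.symm ?_)
      norm_num
      try ring)
    (by norm_num) (fun x hx => by
      show (0:ℝ) ≤ (x - x^3/6 + x^5/120) - Real.sin x
      linarith [T_s5 x hx.le])
  intro x hx
  have h := H x hx; linarith

lemma T_s7 : ∀ x : ℝ, 0 ≤ x → x - x^3/6 + x^5/120 - x^7/5040 ≤ Real.sin x := by
  have H := nonneg_of_hasDerivAt (F := fun x => Real.sin x - (x - x^3/6 + x^5/120 - x^7/5040)) (f := fun x => Real.cos x - (1 - x^2/2 + x^4/24 - x^6/720))
    (fun x => by
      have h1 := (Real.hasDerivAt_sin x).sub ((((hasDerivAt_id x).sub ((hasDerivAt_pow 3 x).div_const 6)).add ((hasDerivAt_pow 5 x).div_const 120)).sub ((hasDerivAt_pow 7 x).div_const 5040))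
      refine h1.congr_deriv (Eq.symm ?_)
      norm_num
      try ring)
    (by norm_num) (fun x hx => by
      show (0:ℝ) ≤ Real.cos x - (1 - x^2/2 + x^4/24 - x^6/720)
      linarith [T_c6 x hx.le])
  intro x hx
  have h := H x hx; linarith

lemma T_c8 : ∀ x : ℝ, 0 ≤ x → Real.cos x ≤ 1 - x^2/2 + x^4/24 - x^6/720 + x^8/40320 := by
  have H := nonneg_of_hasDerivAt (F := fun x => (1 - x^2/2 + x^4/24 - x^6/720 + x^8/40320) - Real.cos x) (f := fun x => Real.sin x - (x - x^3/6 + x^5/120 - x^7/5040))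
    (fun x => by
      have h1 := (((((hasDerivAt_const x (1:ℝ)).sub ((hasDerivAt_pow 2 x).div_const 2)).add ((hasDerivAt_pow 4 x).div_const 24)).sub ((hasDerivAt_pow 6 x).div_const 720)).add ((hasDerivAt_pow 8 x).div_const 40320)).sub (Real.hasDerivAt_cos x)
      refine h1.congr_deriv (Eq.symm ?_)
      norm_num
      try ring)
    (by norm_num) (fun x hx => by
      show (0:ℝ) ≤ Real.sin x - (x - x^3/6 + x^5/120 - x^7/5040)
      linarith [T_s7 x hx.le])
  intro x hx
  have h := H x hx; linarith

lemma T_s9 : ∀ x : ℝ, 0 ≤ x → Real.sin x ≤ x - x^3/6 + x^5/120 - x^7/5040 + x^9/362880 := by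
  have H := nonneg_of_hasDerivAt (F := fun x => (x - x^3/6 + x^5/120 - x^7/5040 + x^9/362880) - Real.sin x) (f := fun x => (1 - x^2/2 + x^4/24 - x^6/720 + x^8/40320) - Real.cos x)
    (fun x => by
      have h1 := (((((hasDerivAt_id x).sub ((hasDerivAt_pow 3 x).div_const 6)).add ((hasDerivAt_pow 5 x).div_const 120)).sub ((hasDerivAt_pow 7 x).div_const 5040)).add ((hasDerivAt_pow 9 x).div_const 362880)).sub (Real.hasDerivAt_sin x)
      refine h1.congr_deriv (Eq.symm ?_)
      norm_num
      try ring)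
    (by norm_num) (fun x hx => by
      show (0:ℝ) ≤ (1 - x^2/2 + x^4/24 - x^6/720 + x^8/40320) - Real.cos x
      linarith [T_c8 x hx.le])
  intro x hx
  have h := H x hx; linarith

lemma T_c10 : ∀ x : ℝ, 0 ≤ x → 1 - x^2/2 + x^4/24 - x^6/720 + x^8/40320 - x^10/3628800 ≤ Real.cos x := by
  have H := nonneg_of_hasDerivAt (F := fun x => Real.cos x - (1 - x^2/2 + x^4/24 - x^6/720 + x^8/40320 - x^10/3628800)) (f := fun x => (x - x^3/6 + x^5/120 - x^7/5040 + x^9/362880) - Real.sin x)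
    (fun x => by
      have h1 := (Real.hasDerivAt_cos x).sub ((((((hasDerivAt_const x (1:ℝ)).sub ((hasDerivAt_pow 2 x).div_const 2)).add ((hasDerivAt_pow 4 x).div_const 24)).sub ((hasDerivAt_pow 6 x).div_const 720)).add ((hasDerivAt_pow 8 x).div_const 40320)).sub ((hasDerivAt_pow 10 x).div_const 3628800))
      refine h1.congr_deriv (Eq.symm ?_)
      norm_num
      try ring)
    (by norm_num) (fun x hx => by
      show (0:ℝ) ≤ (x - x^3/6 + x^5/120 - x^7/5040 + x^9/362880) - Real.sin x
      linarith [T_s9 x hx.le])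
  intro x hx
  have h := H x hx; linarith

noncomputable def hfun (x : ℝ) : ℝ :=
  Real.cos x * (Real.sin x - x * Real.cos x) * (Real.sin x + 2*x*Real.cos x) - x * Real.sin x ^ 3

lemma hfun_cont : Continuous hfun := by unfold hfun; fun_prop

lemma hasDerivAt_hfun (x : ℝ) :
    HasDerivAt hfun (3*Real.sin x - 5*Real.sin x^3 + x*Real.cos x*(2*Real.cos x^2 - 5)
      + 6*x^2*Real.sin x*Real.cos x^2) x := by
  have H := (((Real.hasDerivAt_cos x).mul ((Real.hasDerivAt_sin x).sub
      ((hasDerivAt_id x).mul (Real.hasDerivAt_cos x)))).mul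
      ((Real.hasDerivAt_sin x).add (((hasDerivAt_id x).const_mul (2:ℝ)).mul
      (Real.hasDerivAt_cos x)))).sub ((hasDerivAt_id x).mul ((Real.hasDerivAt_sin x).pow 3))
  refine H.congr_deriv (Eq.symm ?_)
  have pyth := Real.sin_sq_add_cos_sq x
  simp only [id_eq, Nat.cast_ofNat]
  norm_num
  linear_combination (5*x*Real.cos x - 3*Real.sin x) * pyth

lemma Dpos {x : ℝ} (hx : 0 < x) (hxpi : x ≤ π) : 0 < Real.sin x - x * Real.cos x := by
  have hG : ∀ y : ℝ, HasDerivAt (fun z => Real.sin z - z * Real.cos z) (y * Real.sin y) y := by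
    intro y
    have H := (Real.hasDerivAt_sin y).sub ((hasDerivAt_id y).mul (Real.hasDerivAt_cos y))
    refine H.congr_deriv (Eq.symm ?_)
    simp only [id_eq]
    ring
  have key : StrictMonoOn (fun z => Real.sin z - z * Real.cos z) (Set.Icc 0 π) := by
    apply strictMonoOn_of_deriv_pos (convex_Icc 0 π)
    · fun_prop
    · intro y hy
      rw [interior_Icc] at hy
      rw [(hG y).deriv]
      exact mul_pos hy.1 (Real.sin_pos_of_pos_of_lt_pi hy.1 hy.2)
  have h := key (Set.mem_Icc.2 ⟨le_refl 0, Real.pi_pos.le⟩) (Set.mem_Icc.2 ⟨hx.le, hxpi⟩) hx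
  simpa using h

lemma hasDerivAt_FH {x : ℝ} (hx : 0 < x) (hxpi : x < π) :
    HasDerivAt FH (Real.sin x * hfun x / (Real.sin x - x * Real.cos x)^2) x := by
  have hD := Dpos hx hxpi.le
  have hne : Real.sin x - id x * Real.cos x ≠ 0 := by simpa using hD.ne'
  have hD' : Real.sin x - x * Real.cos x ≠ 0 := hD.ne'
  have H := (((hasDerivAt_id x).mul ((Real.hasDerivAt_sin x).pow 2)).mul
      (Real.hasDerivAt_cos x)).div ((Real.hasDerivAt_sin x).sub
      ((hasDerivAt_id x).mul (Real.hasDerivAt_cos x))) hne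
  refine H.congr_deriv (Eq.symm ?_)
  simp only [id_eq, Nat.cast_ofNat, Pi.sub_apply, Pi.mul_apply, Pi.pow_apply]
  field_simp
  unfold hfun
  ring

section polybounds
variable {x : ℝ}

-- products helper is inlined via nlinarith hints
lemma pb_S_mid (h1 : 3/2 ≤ x) (h2 : x ≤ 2) : 9/10 ≤ x - x^3/6 + x^5/120 - x^7/5040 := by
  have ha : (0:ℝ) ≤ x - 3/2 := by linarith
  have hb : (0:ℝ) ≤ 2 - x := by linarith
  nlinarith [mul_nonneg hb ha, mul_nonneg (sq_nonneg (2-x)) ha, mul_nonneg (pow_nonneg hb 3) ha,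
    mul_nonneg (pow_nonneg hb 4) ha, mul_nonneg (pow_nonneg hb 5) ha, mul_nonneg (pow_nonneg hb 6) ha,
    mul_nonneg (sq_nonneg (x-3/2)) hb, mul_nonneg (pow_nonneg ha 3) hb, mul_nonneg (pow_nonneg ha 4) hb,
    mul_nonneg (pow_nonneg ha 5) hb, mul_nonneg (pow_nonneg ha 6) hb]

lemma pb_C_mid_ub (h1 : 3/2 ≤ x) (h2 : x ≤ 2) :
    1 - x^2/2 + x^4/24 - x^6/720 + x^8/40320 ≤ 2/25 := by
  have ha : (0:ℝ) ≤ x - 3/2 := by linarith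
  have hb : (0:ℝ) ≤ 2 - x := by linarith
  nlinarith [mul_nonneg hb ha, mul_nonneg (sq_nonneg (2-x)) ha, mul_nonneg (pow_nonneg hb 3) ha,
    mul_nonneg (pow_nonneg hb 4) ha, mul_nonneg (pow_nonneg hb 5) ha, mul_nonneg (pow_nonneg hb 6) ha,
    mul_nonneg (sq_nonneg (x-3/2)) hb, mul_nonneg (pow_nonneg ha 3) hb, mul_nonneg (pow_nonneg ha 4) hb,
    mul_nonneg (pow_nonneg ha 5) hb, mul_nonneg (pow_nonneg ha 6) hb, mul_nonneg (pow_nonneg ha 7) hb]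

lemma pb_C_mid_lb (h1 : 3/2 ≤ x) (h2 : x ≤ 2) :
    -(43:ℝ)/100 ≤ 1 - x^2/2 + x^4/24 - x^6/720 := by
  have ha : (0:ℝ) ≤ x - 3/2 := by linarith
  have hb : (0:ℝ) ≤ 2 - x := by linarith
  nlinarith [mul_nonneg hb ha, mul_nonneg (sq_nonneg (2-x)) ha, mul_nonneg (pow_nonneg hb 3) ha,
    mul_nonneg (pow_nonneg hb 4) ha, mul_nonneg (pow_nonneg hb 5) ha,
    mul_nonneg (sq_nonneg (x-3/2)) hb, mul_nonneg (pow_nonneg ha 3) hb, mul_nonneg (pow_nonneg ha 4) hb,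
    mul_nonneg (pow_nonneg ha 5) hb]
end polybounds

section
variable {x : ℝ}

lemma pb_S_m2_lb (h1 : 2 ≤ x) (h2 : x ≤ 11/5) : 4/5 ≤ x - x^3/6 + x^5/120 - x^7/5040 := by
  have ha : (0:ℝ) ≤ x - 2 := by linarith
  have hb : (0:ℝ) ≤ 11/5 - x := by linarith
  nlinarith [mul_nonneg hb ha, mul_nonneg (sq_nonneg (11/5-x)) ha, mul_nonneg (pow_nonneg hb 3) ha,
    mul_nonneg (pow_nonneg hb 4) ha, mul_nonneg (pow_nonneg hb 5) ha, mul_nonneg (pow_nonneg hb 6) ha,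
    mul_nonneg (sq_nonneg (x-2)) hb, mul_nonneg (pow_nonneg ha 3) hb, mul_nonneg (pow_nonneg ha 4) hb,
    mul_nonneg (pow_nonneg ha 5) hb, mul_nonneg (pow_nonneg ha 6) hb]

lemma pb_S_m2_ub (h1 : 2 ≤ x) (h2 : x ≤ 11/5) :
    x - x^3/6 + x^5/120 - x^7/5040 + x^9/362880 ≤ 92/100 := by
  have ha : (0:ℝ) ≤ x - 2 := by linarith
  have hb : (0:ℝ) ≤ 11/5 - x := by linarith
  nlinarith [mul_nonneg hb ha, mul_nonneg (sq_nonneg (11/5-x)) ha, mul_nonneg (pow_nonneg hb 3) ha,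
    mul_nonneg (pow_nonneg hb 4) ha, mul_nonneg (pow_nonneg hb 5) ha, mul_nonneg (pow_nonneg hb 6) ha,
    mul_nonneg (sq_nonneg (x-2)) hb, mul_nonneg (pow_nonneg ha 3) hb, mul_nonneg (pow_nonneg ha 4) hb,
    mul_nonneg (pow_nonneg ha 5) hb, mul_nonneg (pow_nonneg ha 6) hb, mul_nonneg (pow_nonneg ha 7) hb,
    mul_nonneg (pow_nonneg ha 8) hb]

lemma pb_C_m2_ub (h1 : 2 ≤ x) (h2 : x ≤ 11/5) :
    1 - x^2/2 + x^4/24 - x^6/720 + x^8/40320 ≤ -41/100 := by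
  have ha : (0:ℝ) ≤ x - 2 := by linarith
  have hb : (0:ℝ) ≤ 11/5 - x := by linarith
  nlinarith [mul_nonneg hb ha, mul_nonneg (sq_nonneg (11/5-x)) ha, mul_nonneg (pow_nonneg hb 3) ha,
    mul_nonneg (pow_nonneg hb 4) ha, mul_nonneg (pow_nonneg hb 5) ha, mul_nonneg (pow_nonneg hb 6) ha,
    mul_nonneg (sq_nonneg (x-2)) hb, mul_nonneg (pow_nonneg ha 3) hb, mul_nonneg (pow_nonneg ha 4) hb,
    mul_nonneg (pow_nonneg ha 5) hb, mul_nonneg (pow_nonneg ha 6) hb, mul_nonneg (pow_nonneg ha 7) hb]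

lemma pb_C_m2_lb (h1 : 2 ≤ x) (h2 : x ≤ 11/5) :
    -61/100 ≤ 1 - x^2/2 + x^4/24 - x^6/720 := by
  have ha : (0:ℝ) ≤ x - 2 := by linarith
  have hb : (0:ℝ) ≤ 11/5 - x := by linarith
  nlinarith [mul_nonneg hb ha, mul_nonneg (sq_nonneg (11/5-x)) ha, mul_nonneg (pow_nonneg hb 3) ha,
    mul_nonneg (pow_nonneg hb 4) ha, mul_nonneg (pow_nonneg hb 5) ha,
    mul_nonneg (sq_nonneg (x-2)) hb, mul_nonneg (pow_nonneg ha 3) hb, mul_nonneg (pow_nonneg ha 4) hb,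
    mul_nonneg (pow_nonneg ha 5) hb]

lemma pb_S_b1_ub (h1 : 11/5 ≤ x) (h2 : x ≤ 27/10) :
    x - x^3/6 + x^5/120 - x^7/5040 + x^9/362880 ≤ 82/100 := by
  have ha : (0:ℝ) ≤ x - 11/5 := by linarith
  have hb : (0:ℝ) ≤ 27/10 - x := by linarith
  nlinarith [mul_nonneg hb ha, mul_nonneg (sq_nonneg (27/10-x)) ha, mul_nonneg (pow_nonneg hb 3) ha,
    mul_nonneg (pow_nonneg hb 4) ha, mul_nonneg (pow_nonneg hb 5) ha, mul_nonneg (pow_nonneg hb 6) ha,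
    mul_nonneg (sq_nonneg (x-11/5)) hb, mul_nonneg (pow_nonneg ha 3) hb, mul_nonneg (pow_nonneg ha 4) hb,
    mul_nonneg (pow_nonneg ha 5) hb, mul_nonneg (pow_nonneg ha 6) hb, mul_nonneg (pow_nonneg ha 7) hb,
    mul_nonneg (pow_nonneg ha 8) hb]

lemma pb_C_b1_ub (h1 : 11/5 ≤ x) (h2 : x ≤ 27/10) :
    1 - x^2/2 + x^4/24 - x^6/720 + x^8/40320 ≤ -58/100 := by
  have ha : (0:ℝ) ≤ x - 11/5 := by linarith
  have hb : (0:ℝ) ≤ 27/10 - x := by linarith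
  nlinarith [mul_nonneg hb ha, mul_nonneg (sq_nonneg (27/10-x)) ha, mul_nonneg (pow_nonneg hb 3) ha,
    mul_nonneg (pow_nonneg hb 4) ha, mul_nonneg (pow_nonneg hb 5) ha, mul_nonneg (pow_nonneg hb 6) ha,
    mul_nonneg (sq_nonneg (x-11/5)) hb, mul_nonneg (pow_nonneg ha 3) hb, mul_nonneg (pow_nonneg ha 4) hb,
    mul_nonneg (pow_nonneg ha 5) hb, mul_nonneg (pow_nonneg ha 6) hb, mul_nonneg (pow_nonneg ha 7) hb]

lemma pb_C_b1_lb (h1 : 11/5 ≤ x) (h2 : x ≤ 27/10) :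
    -92/100 ≤ 1 - x^2/2 + x^4/24 - x^6/720 + x^8/40320 - x^10/3628800 := by
  have ha : (0:ℝ) ≤ x - 11/5 := by linarith
  have hb : (0:ℝ) ≤ 27/10 - x := by linarith
  nlinarith [mul_nonneg hb ha, mul_nonneg (sq_nonneg (27/10-x)) ha, mul_nonneg (pow_nonneg hb 3) ha,
    mul_nonneg (pow_nonneg hb 4) ha, mul_nonneg (pow_nonneg hb 5) ha, mul_nonneg (pow_nonneg hb 6) ha,
    mul_nonneg (sq_nonneg (x-11/5)) hb, mul_nonneg (pow_nonneg ha 3) hb, mul_nonneg (pow_nonneg ha 4) hb,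
    mul_nonneg (pow_nonneg ha 5) hb, mul_nonneg (pow_nonneg ha 6) hb, mul_nonneg (pow_nonneg ha 7) hb,
    mul_nonneg (pow_nonneg ha 8) hb, mul_nonneg (pow_nonneg ha 9) hb]

lemma pb_C_b2_ub (h1 : 27/10 ≤ x) (h2 : x ≤ 31416/10000) :
    1 - x^2/2 + x^4/24 - x^6/720 + x^8/40320 ≤ -89/100 := by
  have ha : (0:ℝ) ≤ x - 27/10 := by linarith
  have hb : (0:ℝ) ≤ 31416/10000 - x := by linarith
  nlinarith [mul_nonneg hb ha, mul_nonneg (sq_nonneg (31416/10000-x)) ha, mul_nonneg (pow_nonneg hb 3) ha,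
    mul_nonneg (pow_nonneg hb 4) ha, mul_nonneg (pow_nonneg hb 5) ha, mul_nonneg (pow_nonneg hb 6) ha,
    mul_nonneg (sq_nonneg (x-27/10)) hb, mul_nonneg (pow_nonneg ha 3) hb, mul_nonneg (pow_nonneg ha 4) hb,
    mul_nonneg (pow_nonneg ha 5) hb, mul_nonneg (pow_nonneg ha 6) hb, mul_nonneg (pow_nonneg ha 7) hb]
end

lemma key_mid {x S C : ℝ} (hx1 : 3/2 ≤ x) (hx2 : x ≤ 2) (hS1 : 9/10 ≤ S) (hS2 : S ≤ 1)
    (hC1 : -(43:ℝ)/100 ≤ C) (hC2 : C ≤ 2/25) :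
    C - C^3 - x*S*(1-2*C^2) - 2*x^2*C^3 < 0 := by
  have hu : (0:ℝ) ≤ C + 43/100 := by linarith
  have hv : (0:ℝ) ≤ 2/25 - C := by linarith
  have hCsq : C^2 ≤ 1849/10000 := by nlinarith [mul_nonneg hu hv]
  have hC3l : -(79507:ℝ)/1000000 ≤ C^3 := by
    nlinarith [mul_nonneg (mul_nonneg hu hu) hu, mul_nonneg (mul_nonneg hu hu) hv,
      mul_nonneg (mul_nonneg hu hv) hv, mul_nonneg (mul_nonneg hv hv) hv]
  have hC3u : C^3 ≤ (512:ℝ)/1000000 := by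
    nlinarith [mul_nonneg (mul_nonneg hu hu) hu, mul_nonneg (mul_nonneg hu hu) hv,
      mul_nonneg (mul_nonneg hu hv) hv, mul_nonneg (mul_nonneg hv hv) hv]
  have hA : C - C^3 ≤ 2/25 := by
    nlinarith [mul_nonneg (mul_nonneg hu hu) hu, mul_nonneg (mul_nonneg hu hu) hv,
      mul_nonneg (mul_nonneg hu hv) hv, mul_nonneg (mul_nonneg hv hv) hv]
  have hxS : 27/20 ≤ x*S := by nlinarith [mul_nonneg (by linarith : (0:ℝ) ≤ x - 3/2) (by linarith : (0:ℝ) ≤ S - 9/10)]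
  have h2C : 6302/10000 ≤ 1 - 2*C^2 := by linarith
  have hB : (3:ℝ)/2 * (9/10) * (6302/10000) ≤ x*S*(1-2*C^2) := by
    nlinarith [mul_nonneg (by linarith : (0:ℝ) ≤ x*S - 27/20) (by linarith : (0:ℝ) ≤ 1 - 2*C^2 - 6302/10000)]
  have hp1 : (0:ℝ) ≤ (x^2 - 9/4) * (C^3 + 79507/1000000) := by
    apply mul_nonneg _ (by linarith)
    nlinarith
  have hp2 : (0:ℝ) ≤ (4 - x^2) * (C^3 + 79507/1000000) := by
    apply mul_nonneg _ (by linarith)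
    nlinarith
  nlinarith [hA, hB, hp1, hp2, hC3u, hC3l]

lemma key_m2 {x S C : ℝ} (hx1 : 2 ≤ x) (hx2 : x ≤ 11/5) (hS1 : 4/5 ≤ S) (hS2 : S ≤ 92/100)
    (hC1 : -61/100 ≤ C) (hC2 : C ≤ -41/100) :
    0 < 3*S - 5*S^3 + x*C*(2*C^2-5) + 6*x^2*S*C^2 := by
  have hS0 : (0:ℝ) ≤ S := by linarith
  have hS3 : S^3 ≤ (92/100:ℝ)^3 := by nlinarith [pow_le_pow_left₀ hS0 hS2 3]
  have hCsq : C^2 ≤ 3721/10000 := by nlinarith [mul_nonneg (by linarith : (0:ℝ) ≤ C + 61/100) (by linarith : (0:ℝ) ≤ -41/100 - C)]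
  have hxC : 82/100 ≤ x*(-C) := by
    nlinarith [mul_nonneg (by linarith : (0:ℝ) ≤ x - 2) (by linarith : (0:ℝ) ≤ -C - 41/100)]
  have h5 : 42558/10000 ≤ 5 - 2*C^2 := by linarith
  have hB : (82:ℝ)/100 * (42558/10000) ≤ x*(-C)*(5-2*C^2) := by
    nlinarith [mul_nonneg (by linarith : (0:ℝ) ≤ x*(-C) - 82/100) (by linarith : (0:ℝ) ≤ 5 - 2*C^2 - 42558/10000)]
  have ht3 : (0:ℝ) ≤ 6*x^2*S*C^2 := by positivity
  nlinarith [hB, hS3, ht3]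

lemma key_b1 {x S C : ℝ} (hx1 : 11/5 ≤ x) (hx2 : x ≤ 27/10) (hS1 : 0 ≤ S) (hS2 : S ≤ 82/100)
    (hC1 : -92/100 ≤ C) (hC2 : C ≤ -58/100) :
    0 < C - C^3 - x*S*(1-2*C^2) - 2*x^2*C^3 := by
  have hu : (0:ℝ) ≤ C + 92/100 := by linarith
  have hv : (0:ℝ) ≤ -58/100 - C := by linarith
  have hA : -(39:ℝ)/100 ≤ C - C^3 := by
    nlinarith [mul_nonneg (mul_nonneg hu hu) hu, mul_nonneg (mul_nonneg hu hu) hv,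
      mul_nonneg (mul_nonneg hu hv) hv, mul_nonneg (mul_nonneg hv hv) hv]
  have hxS : x*S ≤ 2214/1000 := by
    nlinarith [mul_nonneg (by linarith : (0:ℝ) ≤ 27/10 - x) (by linarith : (0:ℝ) ≤ 82/100 - S)]
  have hCsq : 3364/10000 ≤ C^2 := by nlinarith [mul_nonneg hv (by linarith : (0:ℝ) ≤ -C + 58/100)]
  have hB : x*S*(1-2*C^2) ≤ 7245/10000 := by
    nlinarith [mul_nonneg (by linarith : (0:ℝ) ≤ 2214/1000 - x*S) (by linarith : (0:ℝ) ≤ 2*C^2 - 6728/10000),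
      mul_nonneg (mul_nonneg (by linarith : (0:ℝ) ≤ x) hS1) (by linarith : (0:ℝ) ≤ 2*C^2 - 6728/10000)]
  have hx2sq : 484/100 ≤ x^2 := by nlinarith
  have hC3 : (-C)^3 ≥ 195112/1000000 := by
    nlinarith [mul_nonneg (mul_nonneg hu hu) hu, mul_nonneg (mul_nonneg hu hu) hv,
      mul_nonneg (mul_nonneg hu hv) hv, mul_nonneg (mul_nonneg hv hv) hv]
  have hD : 2*(484/100)*(195112/1000000) ≤ 2*x^2*(-C)^3 := by
    nlinarith [mul_nonneg (by linarith : (0:ℝ) ≤ x^2 - 484/100) (by linarith : (0:ℝ) ≤ (-C)^3 - 195112/1000000)]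
  nlinarith [hA, hB, hD]

lemma key_b2 {x S C : ℝ} (hx1 : 27/10 ≤ x) (hx2 : x ≤ 31416/10000) (hS1 : 0 ≤ S) (hS2 : S ≤ 1)
    (hC1 : -1 ≤ C) (hC2 : C ≤ -89/100) :
    0 < C - C^3 - x*S*(1-2*C^2) - 2*x^2*C^3 := by
  have hu : (0:ℝ) ≤ C + 1 := by linarith
  have hv : (0:ℝ) ≤ -89/100 - C := by linarith
  have hA : -(19:ℝ)/100 ≤ C - C^3 := by
    nlinarith [mul_nonneg (mul_nonneg hu hu) hu, mul_nonneg (mul_nonneg hu hu) hv,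
      mul_nonneg (mul_nonneg hu hv) hv, mul_nonneg (mul_nonneg hv hv) hv]
  have hCsq : 7921/10000 ≤ C^2 := by nlinarith [mul_nonneg hv (by linarith : (0:ℝ) ≤ -C + 89/100)]
  have hB : 0 ≤ x*S*(2*C^2-1) := by
    apply mul_nonneg (mul_nonneg (by linarith) hS1); linarith
  have hx2sq : 729/100 ≤ x^2 := by nlinarith
  have hC3 : (-C)^3 ≥ 704969/1000000 := by
    nlinarith [mul_nonneg (mul_nonneg hu hu) hu, mul_nonneg (mul_nonneg hu hu) hv,
      mul_nonneg (mul_nonneg hu hv) hv, mul_nonneg (mul_nonneg hv hv) hv]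
  have hD : 2*(729/100)*(704969/1000000) ≤ 2*x^2*(-C)^3 := by
    nlinarith [mul_nonneg (by linarith : (0:ℝ) ≤ x^2 - 729/100) (by linarith : (0:ℝ) ≤ (-C)^3 - 704969/1000000)]
  nlinarith [hA, hB, hD]

lemma key_h2 {S C : ℝ} (hS1 : 9/10 ≤ S) (hS2 : S ≤ 91/100)
    (hC1 : -43/100 ≤ C) (hC2 : C ≤ -41/100) :
    S^2*C + 2*S*C^2 - 2*S^3 - 8*C^3 < 0 := by
  have hu : (0:ℝ) ≤ C + 43/100 := by linarith
  have hv : (0:ℝ) ≤ -41/100 - C := by linarith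
  have h1 : S^2*C ≤ 81/100*C := by
    nlinarith [mul_nonneg (by nlinarith : (0:ℝ) ≤ S^2 - 81/100) (by linarith : (0:ℝ) ≤ -C)]
  have hCsq : C^2 ≤ 1849/10000 := by nlinarith [mul_nonneg hu hv]
  have h2 : S*C^2 ≤ 91/100*(1849/10000) := by nlinarith [mul_nonneg (by linarith : (0:ℝ) ≤ 91/100 - S) (sq_nonneg C)]
  have h3 : (9/10:ℝ)^3 ≤ S^3 := by nlinarith
  have h4 : -C^3 ≤ (43/100:ℝ)^3 := by
    nlinarith [mul_nonneg (mul_nonneg hu hu) hu, mul_nonneg (mul_nonneg hu hu) hv,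
      mul_nonneg (mul_nonneg hu hv) hv, mul_nonneg (mul_nonneg hv hv) hv]
  nlinarith [h1, h2, h3, h4]

lemma key_h22 {S C : ℝ} (hS1 : 805/1000 ≤ S) (hS2 : S ≤ 809/1000)
    (hC1 : -589/1000 ≤ C) (hC2 : C ≤ -5877/10000) :
    0 < S^2*C + 11/5*S*C^2 - 11/5*S^3 - 2*(11/5)^2*C^3 := by
  have hu : (0:ℝ) ≤ C + 589/1000 := by linarith
  have hv : (0:ℝ) ≤ -5877/10000 - C := by linarith
  have h1 : S^2*C ≥ (809/1000)^2*(-589/1000) := by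
    nlinarith [mul_nonneg (by linarith : (0:ℝ) ≤ 809/1000 - S) (by linarith : (0:ℝ) ≤ S + 809/1000), mul_nonneg (mul_nonneg (by linarith : (0:ℝ) ≤ 809/1000 - S) (by linarith : (0:ℝ) ≤ S + 809/1000)) (by linarith : (0:ℝ) ≤ -C)]
  have hCsq : C^2 ≥ (5877/10000)^2 := by nlinarith [mul_nonneg hv (by linarith : (0:ℝ) ≤ -C + 5877/10000)]
  have h2 : S*C^2 ≥ 805/1000*(5877/10000)^2 := by
    nlinarith [mul_nonneg (by linarith : (0:ℝ) ≤ S - 805/1000) (by linarith : (0:ℝ) ≤ C^2 - (5877/10000)^2)]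
  have h3 : S^3 ≤ (809/1000:ℝ)^3 := by nlinarith
  have h4 : -C^3 ≥ (5877/10000:ℝ)^3 := by
    nlinarith [mul_nonneg (mul_nonneg hu hu) hu, mul_nonneg (mul_nonneg hu hu) hv,
      mul_nonneg (mul_nonneg hu hv) hv, mul_nonneg (mul_nonneg hv hv) hv]
  nlinarith [h1, h2, h3, h4]

lemma h_neg_low : ∀ x : ℝ, 0 < x → x ≤ 3/2 → hfun x < 0 := by
  intro x hx hx2
  have hx0 : (0:ℝ) ≤ x := hx.le
  have s3 := T_s3 x hx0
  have s5 := T_s5 x hx0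
  have c4 := T_c4 x hx0
  have c6 := T_c6 x hx0
  set S := Real.sin x with hS
  set C := Real.cos x with hC
  have hx2' : x^2 ≤ 9/4 := by nlinarith
  -- positivity facts
  have hclb : (0:ℝ) < 1 - x^2/2 + x^4/24 - x^6/720 := by nlinarith [sq_nonneg x, sq_nonneg (x^2 - 2)]
  have hCpos : 0 < C := lt_of_lt_of_le hclb c6
  have hslb : (0:ℝ) ≤ x - x^3/6 := by nlinarith
  have hSpos : (0:ℝ) < S := lt_of_lt_of_le (by nlinarith : (0:ℝ) < x - x^3/6 + 0) (by linarith)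

  -- D = S - x*C bounds
  have hD1 : 0 < S - x*C := by nlinarith [mul_le_mul_of_nonneg_left c4 hx0, mul_pos (mul_pos hx hx) hx]
  have hD2 : S - x*C ≤ x^3/3 - x^5/30 + x^7/720 := by
    nlinarith [mul_le_mul_of_nonneg_left c6 hx0]
  -- E = S + 2*x*C bounds
  have hE1 : 0 < S + 2*x*C := by positivity
  have hE2 : S + 2*x*C ≤ (x - x^3/6 + x^5/120) + 2*x*(1 - x^2/2 + x^4/24) := by
    nlinarith [mul_le_mul_of_nonneg_left c4 hx0]
  have hCub : C ≤ 1 - x^2/2 + x^4/24 := c4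
  have hDub_nonneg : (0:ℝ) ≤ x^3/3 - x^5/30 + x^7/720 := le_trans hD1.le hD2
  have hEub_nonneg : (0:ℝ) ≤ (x - x^3/6 + x^5/120) + 2*x*(1 - x^2/2 + x^4/24) :=
    le_trans hE1.le hE2
  -- product bound
  have hprod : C * (S - x*C) * (S + 2*x*C) ≤
      (1 - x^2/2 + x^4/24) * (x^3/3 - x^5/30 + x^7/720) *
        ((x - x^3/6 + x^5/120) + 2*x*(1 - x^2/2 + x^4/24)) := by
    have h1 : C * (S - x*C) ≤ (1 - x^2/2 + x^4/24) * (x^3/3 - x^5/30 + x^7/720) :=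
      mul_le_mul hCub hD2 hD1.le (by nlinarith)
    exact mul_le_mul h1 hE2 hE1.le (mul_nonneg (by nlinarith) hDub_nonneg)
  -- cube bound
  have hcube : x * (x - x^3/6)^3 ≤ x * S^3 := by
    have := pow_le_pow_left₀ hslb s3 3
    nlinarith
  -- final polynomial inequality
  have hpoly : (1 - x^2/2 + x^4/24) * (x^3/3 - x^5/30 + x^7/720) *
      ((x - x^3/6 + x^5/120) + 2*x*(1 - x^2/2 + x^4/24)) < x * (x - x^3/6)^3 := by
    have key : (0:ℝ) < 22/45 - (199/720)*x^2 + (103/1800)*x^4 - (239/43200)*x^6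
        + (67/259200)*x^8 - (11/2073600)*x^10 := by
      have ht : (0:ℝ) ≤ 9/4 - x^2 := by linarith
      nlinarith [sq_nonneg (x^2 - 309/100),
        mul_nonneg (mul_nonneg (sq_nonneg x) (sq_nonneg x)) ht,
        mul_nonneg (mul_nonneg (mul_nonneg (sq_nonneg x) (sq_nonneg x))
          (mul_nonneg (sq_nonneg x) (sq_nonneg x))) ht]
    nlinarith [mul_pos (pow_pos hx 6) key]
  unfold hfun
  linarith [hprod, hcube, hpoly]



lemma h_neg {x : ℝ} (hx : 0 < x) (hx2 : x ≤ 2) : hfun x < 0 := by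
  rcases le_or_gt x (3/2) with h | h
  · exact h_neg_low x hx h
  · have hx0 : (0:ℝ) ≤ x := hx.le
    have hS1 : 9/10 ≤ Real.sin x := le_trans (pb_S_mid h.le hx2) (T_s7 x hx0)
    have hS2 := Real.sin_le_one x
    have hC2 : Real.cos x ≤ 2/25 := le_trans (T_c8 x hx0) (pb_C_mid_ub h.le hx2)
    have hC1 : -(43:ℝ)/100 ≤ Real.cos x := le_trans (pb_C_mid_lb h.le hx2) (T_c6 x hx0)
    have key := key_mid h.le hx2 hS1 hS2 hC1 hC2
    have expand : hfun x = Real.cos x - Real.cos x^3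
        - x*Real.sin x*(1-2*Real.cos x^2) - 2*x^2*Real.cos x^3 := by
      unfold hfun
      linear_combination (Real.cos x - x*Real.sin x) * (Real.sin_sq_add_cos_sq x)
    rw [expand]; exact key

lemma h_pos {x : ℝ} (hx1 : 11/5 ≤ x) (hx2 : x < π) : 0 < hfun x := by
  have hx0 : (0:ℝ) ≤ x := by linarith
  have hxle : x ≤ 31416/10000 := by linarith [Real.pi_lt_d6]
  have hS1 : 0 ≤ Real.sin x := Real.sin_nonneg_of_nonneg_of_le_pi hx0 hx2.le
  have expand : hfun x = Real.cos x - Real.cos x^3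
      - x*Real.sin x*(1-2*Real.cos x^2) - 2*x^2*Real.cos x^3 := by
    unfold hfun
    linear_combination (Real.cos x - x*Real.sin x) * (Real.sin_sq_add_cos_sq x)
  rw [expand]
  rcases le_or_gt x (27/10) with h | h
  · have hS2 : Real.sin x ≤ 82/100 := le_trans (T_s9 x hx0) (pb_S_b1_ub hx1 h)
    have hC2 : Real.cos x ≤ -58/100 := le_trans (T_c8 x hx0) (pb_C_b1_ub hx1 h)
    have hC1 : -92/100 ≤ Real.cos x := le_trans (pb_C_b1_lb hx1 h) (T_c10 x hx0)
    exact key_b1 hx1 h hS1 hS2 hC1 hC2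
  · have hC2 : Real.cos x ≤ -89/100 := le_trans (T_c8 x hx0) (pb_C_b2_ub h.le hxle)
    exact key_b2 h.le hxle hS1 (Real.sin_le_one x) (Real.neg_one_le_cos x) hC2

lemma hfun_mono : StrictMonoOn hfun (Set.Icc 2 (11/5)) := by
  apply strictMonoOn_of_deriv_pos (convex_Icc 2 (11/5)) hfun_cont.continuousOn
  intro y hy
  rw [interior_Icc] at hy
  rw [(hasDerivAt_hfun y).deriv]
  have h1 : (2:ℝ) ≤ y := hy.1.le
  have h2 : y ≤ 11/5 := hy.2.le
  have hy0 : (0:ℝ) ≤ y := by linarith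
  have hS1 : 4/5 ≤ Real.sin y := le_trans (pb_S_m2_lb h1 h2) (T_s7 y hy0)
  have hS2 : Real.sin y ≤ 92/100 := le_trans (T_s9 y hy0) (pb_S_m2_ub h1 h2)
  have hC2 : Real.cos y ≤ -41/100 := le_trans (T_c8 y hy0) (pb_C_m2_ub h1 h2)
  have hC1 : -61/100 ≤ Real.cos y := le_trans (pb_C_m2_lb h1 h2) (T_c6 y hy0)
  exact key_m2 h1 h2 hS1 hS2 hC1 hC2

lemma h2num : hfun 2 < 0 := by
  have e : hfun 2 = Real.sin 2^2*Real.cos 2 + 2*Real.sin 2*Real.cos 2^2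
      - 2*Real.sin 2^3 - 8*Real.cos 2^3 := by unfold hfun; ring
  rw [e]
  have hs7 := T_s7 2 (by norm_num)
  have hs9 := T_s9 2 (by norm_num)
  have hc6 := T_c6 2 (by norm_num)
  have hc8 := T_c8 2 (by norm_num)
  apply key_h2 <;> nlinarith [hs7, hs9, hc6, hc8]

lemma h22num : 0 < hfun (11/5) := by
  have e : hfun (11/5) = Real.sin (11/5)^2*Real.cos (11/5) + 11/5*Real.sin (11/5)*Real.cos (11/5)^2
      - 11/5*Real.sin (11/5)^3 - 2*(11/5)^2*Real.cos (11/5)^3 := by unfold hfun; ring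
  rw [e]
  have hs7 := T_s7 (11/5) (by norm_num)
  have hs9 := T_s9 (11/5) (by norm_num)
  have hc8 := T_c8 (11/5) (by norm_num)
  have hc10 := T_c10 (11/5) (by norm_num)
  apply key_h22 <;> nlinarith [hs7, hs9, hc8, hc10]

/-- There is a unique `φ_m ∈ (0,π)` such that `F` is strictly decreasing on
`(0,φ_m]` and strictly increasing on `[φ_m,π)`; moreover `F(π/2) = 0` and
`F(φ) → 0` as `φ → π⁻`. -/
theorem FH_unique_min :
    (∃! φm : ℝ, φm ∈ Set.Ioo 0 π ∧
      StrictAntiOn FH (Set.Ioc 0 φm) ∧ StrictMonoOn FH (Set.Ico φm π)) ∧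
    FH (π / 2) = 0 ∧
    Tendsto FH (nhdsWithin π (Set.Ioo 0 π)) (nhds 0) := by
  obtain ⟨φm, hφmem, hφroot⟩ : ∃ φm ∈ Set.Ioo (2:ℝ) (11/5), hfun φm = 0 := by
    have hc : ContinuousOn hfun (Set.Icc 2 (11/5)) := hfun_cont.continuousOn
    have h0mem : (0:ℝ) ∈ Set.Ioo (hfun 2) (hfun (11/5)) := ⟨h2num, h22num⟩
    obtain ⟨φm, hmem, heq⟩ := intermediate_value_Ioo (by norm_num : (2:ℝ) ≤ 11/5) hc h0mem
    exact ⟨φm, hmem, heq⟩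
  obtain ⟨hφ2, hφ22⟩ := hφmem
  have hπ3 : (3:ℝ) < π := Real.pi_gt_three
  have hφpos : (0:ℝ) < φm := by linarith
  have hφπ : φm < π := by linarith
  have hneg : ∀ y, 0 < y → y < φm → hfun y < 0 := by
    intro y hy1 hy2
    rcases le_or_gt y 2 with h | h
    · exact h_neg hy1 h
    · have := hfun_mono ⟨h.le, by linarith⟩ ⟨hφ2.le, hφ22.le⟩ hy2
      rw [hφroot] at this; exact this
  have hpos : ∀ y, φm < y → y < π → 0 < hfun y := by
    intro y h1 h2
    rcases le_or_gt y (11/5) with h | h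
    · have := hfun_mono ⟨hφ2.le, hφ22.le⟩ ⟨by linarith, h⟩ h1
      rw [hφroot] at this; exact this
    · exact h_pos h.le h2
  have hanti : StrictAntiOn FH (Set.Ioc 0 φm) := by
    apply strictAntiOn_of_deriv_neg (convex_Ioc 0 φm)
    · intro y hy
      exact (hasDerivAt_FH hy.1 (lt_of_le_of_lt hy.2 hφπ)).continuousAt.continuousWithinAt
    · intro y hy
      rw [interior_Ioc] at hy
      rw [(hasDerivAt_FH hy.1 (lt_trans hy.2 hφπ)).deriv]
      have hs := Real.sin_pos_of_pos_of_lt_pi hy.1 (lt_trans hy.2 hφπ)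
      have hh := hneg y hy.1 hy.2
      have hd := Dpos hy.1 (le_of_lt (lt_trans hy.2 hφπ))
      exact div_neg_of_neg_of_pos (mul_neg_of_pos_of_neg hs hh) (pow_pos hd 2)
  have hmono : StrictMonoOn FH (Set.Ico φm π) := by
    apply strictMonoOn_of_deriv_pos (convex_Ico φm π)
    · intro y hy
      exact (hasDerivAt_FH (lt_of_lt_of_le hφpos hy.1) hy.2).continuousAt.continuousWithinAt
    · intro y hy
      rw [interior_Ico] at hy
      rw [(hasDerivAt_FH (lt_trans hφpos hy.1) hy.2).deriv]
      have hd := Dpos (lt_trans hφpos hy.1) hy.2.le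
      exact div_pos (mul_pos (Real.sin_pos_of_pos_of_lt_pi (lt_trans hφpos hy.1) hy.2)
        (hpos y hy.1 hy.2)) (pow_pos hd 2)
  refine ⟨⟨φm, ⟨⟨hφpos, hφπ⟩, hanti, hmono⟩, ?_⟩, ?_, ?_⟩
  · rintro ψ ⟨⟨hψ0, hψπ⟩, hanti', hmono'⟩
    by_contra hne
    rcases lt_or_gt_of_ne hne with hlt | hgt
    · have h1 := hmono' ⟨le_refl ψ, hψπ⟩ ⟨hlt.le, hφπ⟩ hlt
      have h2 := hanti ⟨hψ0, hlt.le⟩ ⟨hφpos, le_refl φm⟩ hlt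
      linarith
    · have h1 := hmono ⟨le_refl φm, hφπ⟩ ⟨hgt.le, hψπ⟩ hgt
      have h2 := hanti' ⟨hφpos, hgt.le⟩ ⟨hψ0, le_refl ψ⟩ hgt
      linarith
  · unfold FH
    rw [Real.cos_pi_div_two]
    simp
  · have hcπ : ContinuousAt FH π := by
      unfold FH
      apply ContinuousAt.div
      · fun_prop
      · fun_prop
      · simp [Real.sin_pi, Real.cos_pi]
    have h := hcπ.continuousWithinAt (s := Set.Ioo 0 π)
    have hFHπ : FH π = 0 := by unfold FH; simp [Real.sin_pi]
    rw [ContinuousWithinAt, hFHπ] at h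
    exact h
end
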